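/- If 1 < γ < 4/3, set M* = 4πĀ(γ−1)/(4−3γ) · r₀^{−(4−3γ)/(γ−1)}. Then: (i) M(R) < M* for every R > r₀; (ii) M(R) → M* as R → ∞; and (iii) for every M ∈ (0, M*) there exists a unique R ∈ (r₀, ∞) with M(R) = M. -/

import Mathlib

open Real Set Filter MeasureTheory intervalIntegral

noncomputable def Gaux (r₀ p R r : ℝ) : ℝ :=
  max (1 / max r r₀ - 1 / max R r₀) 0 ^ p * r ^ 2

lemma Gaux_cont (r₀ p : ℝ) (hr₀ : 0 < r₀) (hp : 0 < p) :
    Continuous fun q : ℝ × ℝ => Gaux r₀ p q.1 q.2 := by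
  have hrpow : Continuous fun x : ℝ => x ^ p := by
    rw [continuous_iff_continuousAt]
    exact fun x => Real.continuousAt_rpow_const x p (Or.inr hp.le)
  apply Continuous.mul
  · apply hrpow.comp
    apply Continuous.max _ continuous_const
    apply Continuous.sub
    · exact continuous_const.div (continuous_snd.max continuous_const)
        (fun q => (lt_max_of_lt_right hr₀ : (0:ℝ) < max q.2 r₀).ne')
    · exact continuous_const.div (continuous_fst.max continuous_const)
        (fun q => (lt_max_of_lt_right hr₀ : (0:ℝ) < max q.1 r₀).ne')
  · exact continuous_snd.pow 2

lemma Gaux_cont_r (r₀ p R : ℝ) (hr₀ : 0 < r₀) (hp : 0 < p) :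
    Continuous (Gaux r₀ p R) :=
  (Gaux_cont r₀ p hr₀ hp).comp (continuous_const.prodMk continuous_id)

lemma Gaux_nonneg (r₀ p R r : ℝ) : 0 ≤ Gaux r₀ p R r :=
  mul_nonneg (Real.rpow_nonneg (le_max_right _ _) _) (sq_nonneg r)

lemma Gaux_eval (r₀ p R r : ℝ) (hr₀ : 0 < r₀) (hR : r₀ < R) (hr : r ∈ Icc r₀ R) :
    Gaux r₀ p R r = (1 / r - 1 / R) ^ p * r ^ 2 := by
  have h1 : max r r₀ = r := max_eq_left hr.1
  have h2 : max R r₀ = R := max_eq_left hR.le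
  have hrpos : 0 < r := lt_of_lt_of_le hr₀ hr.1
  have h3 : (0:ℝ) ≤ 1 / r - 1 / R :=
    sub_nonneg.2 (one_div_le_one_div_of_le hrpos hr.2)
  rw [Gaux, h1, h2, max_eq_left h3]

lemma Gaux_mono (r₀ p R₁ R₂ r : ℝ) (hr₀ : 0 < r₀) (hp : 0 < p) (h : R₁ ≤ R₂) :
    Gaux r₀ p R₁ r ≤ Gaux r₀ p R₂ r := by
  apply mul_le_mul_of_nonneg_right _ (sq_nonneg r)
  apply Real.rpow_le_rpow (le_max_right _ _) _ hp.le
  apply max_le_max _ le_rfl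
  apply sub_le_sub_left
  exact one_div_le_one_div_of_le (lt_max_of_lt_right hr₀) (max_le_max h le_rfl)

lemma Gaux_zero (r₀ p R r : ℝ) (hr₀ : 0 < r₀) (hp : 0 < p) (h : R ≤ r) :
    Gaux r₀ p R r = 0 := by
  have h1 : 1 / max r r₀ - 1 / max R r₀ ≤ 0 := by
    apply sub_nonpos.2
    exact one_div_le_one_div_of_le (lt_max_of_lt_right hr₀) (max_le_max h le_rfl)
  rw [Gaux, max_eq_right h1, Real.zero_rpow hp.ne', zero_mul]

lemma Gaux_le (r₀ p R r : ℝ) (hr₀ : 0 < r₀) (hp : 0 < p) (hr : r₀ ≤ r) :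
    Gaux r₀ p R r ≤ r ^ ((2:ℝ) - p) := by
  have hrpos : 0 < r := lt_of_lt_of_le hr₀ hr
  have h1 : max r r₀ = r := max_eq_left hr
  have hRpos : (0:ℝ) < max R r₀ := lt_max_of_lt_right hr₀
  have h2 : max (1 / max r r₀ - 1 / max R r₀) 0 ≤ 1 / r := by
    rw [h1]
    exact max_le (by nlinarith [one_div_pos.2 hRpos]) (by positivity)
  calc Gaux r₀ p R r ≤ (1 / r) ^ p * r ^ 2 :=
        mul_le_mul_of_nonneg_right
          (Real.rpow_le_rpow (le_max_right _ _) h2 hp.le) (sq_nonneg r)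
    _ = r ^ ((2:ℝ) - p) := by
        rw [one_div, ← Real.rpow_neg_one r, ← Real.rpow_natCast r 2,
          ← Real.rpow_mul hrpos.le, ← Real.rpow_add hrpos]
        ring_nf

lemma Gaux_pos (r₀ p R r : ℝ) (hr₀ : 0 < r₀) (hr : r ∈ Ioo r₀ R) :
    0 < Gaux r₀ p R r := by
  have hrpos : 0 < r := hr₀.trans hr.1
  rw [Gaux_eval r₀ p R r hr₀ (hr.1.trans hr.2) ⟨hr.1.le, hr.2.le⟩]
  have h3 : (0:ℝ) < 1 / r - 1 / R :=
    sub_pos.2 (one_div_lt_one_div_of_lt hrpos hr.2)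
  positivity

lemma Gaux_intble (r₀ p R a b : ℝ) (hr₀ : 0 < r₀) (hp : 0 < p) :
    IntervalIntegrable (Gaux r₀ p R) volume a b :=
  (Gaux_cont_r r₀ p R hr₀ hp).intervalIntegrable a b

noncomputable def Faux (r₀ p R : ℝ) : ℝ := ∫ r in r₀..R, Gaux r₀ p R r

lemma rpow_integral (p a b : ℝ) (hp : 3 < p) (ha : 0 < a) (hb : 0 < b) :
    ∫ r in a..b, r ^ ((2:ℝ) - p) = (a ^ ((3:ℝ) - p) - b ^ ((3:ℝ) - p)) / (p - 3) := by
  rw [integral_rpow (Or.inr ⟨by intro h; linarith, notMem_uIcc_of_lt ha hb⟩)]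
  have h1 : (2:ℝ) - p + 1 = 3 - p := by ring
  rw [h1]
  have h2 : p - 3 ≠ 0 := by intro h; linarith
  have h3 : (3:ℝ) - p ≠ 0 := by intro h; linarith
  field_simp
  try ring

lemma Faux_le (r₀ p R : ℝ) (hr₀ : 0 < r₀) (hp : 3 < p) (hR : r₀ < R) :
    Faux r₀ p R ≤ (r₀ ^ ((3:ℝ) - p) - R ^ ((3:ℝ) - p)) / (p - 3) := by
  have hp0 : 0 < p := by linarith
  rw [← rpow_integral p r₀ R hp hr₀ (hr₀.trans hR)]
  apply integral_mono_on hR.le (Gaux_intble r₀ p R r₀ R hr₀ hp0)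
  · apply ContinuousOn.intervalIntegrable
    apply ContinuousOn.rpow_const continuousOn_id
    intro x hx
    rw [uIcc_of_le hR.le] at hx
    exact Or.inl (by simp only [id]; exact (hr₀.trans_le hx.1).ne')
  · exact fun r hr => Gaux_le r₀ p R r hr₀ hp0 hr.1

lemma Faux_lt (r₀ p R : ℝ) (hr₀ : 0 < r₀) (hp : 3 < p) (hR : r₀ < R) :
    Faux r₀ p R < r₀ ^ ((3:ℝ) - p) / (p - 3) := by
  refine (Faux_le r₀ p R hr₀ hp hR).trans_lt ?_
  apply div_lt_div_of_pos_right _ (by linarith)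
  have : (0:ℝ) < R ^ ((3:ℝ) - p) := Real.rpow_pos_of_pos (hr₀.trans hR) _
  linarith

lemma Faux_strictMono (r₀ p : ℝ) (hr₀ : 0 < r₀) (hp : 3 < p) :
    StrictMonoOn (Faux r₀ p) (Ici r₀) := by
  have hp0 : 0 < p := by linarith
  intro R₁ hR₁ R₂ hR₂ h12
  have key : Faux r₀ p R₂ = (∫ r in r₀..R₁, Gaux r₀ p R₂ r) + ∫ r in R₁..R₂, Gaux r₀ p R₂ r :=
    (integral_add_adjacent_intervals (Gaux_intble r₀ p R₂ r₀ R₁ hr₀ hp0)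
      (Gaux_intble r₀ p R₂ R₁ R₂ hr₀ hp0)).symm
  have h1 : Faux r₀ p R₁ ≤ ∫ r in r₀..R₁, Gaux r₀ p R₂ r := by
    apply integral_mono_on hR₁ (Gaux_intble r₀ p R₁ r₀ R₁ hr₀ hp0)
      (Gaux_intble r₀ p R₂ r₀ R₁ hr₀ hp0)
    exact fun r _ => Gaux_mono r₀ p R₁ R₂ r hr₀ hp0 h12.le
  have h2 : 0 < ∫ r in R₁..R₂, Gaux r₀ p R₂ r := by
    apply intervalIntegral_pos_of_pos_on (Gaux_intble r₀ p R₂ R₁ R₂ hr₀ hp0) _ h12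
    intro r hr
    exact Gaux_pos r₀ p R₂ r hr₀ ⟨lt_of_le_of_lt hR₁ hr.1, hr.2⟩
  linarith

lemma Faux_eq_fixed (r₀ p R B : ℝ) (hr₀ : 0 < r₀) (hp : 0 < p) (hRB : R ≤ B) :
    Faux r₀ p R = ∫ r in r₀..B, Gaux r₀ p R r := by
  rw [← integral_add_adjacent_intervals (Gaux_intble r₀ p R r₀ R hr₀ hp)
    (Gaux_intble r₀ p R R B hr₀ hp)]
  have : (∫ r in R..B, Gaux r₀ p R r) = 0 := by
    rw [integral_congr (g := fun _ => (0:ℝ)) ?_]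
    · simp
    intro r hr
    rw [uIcc_of_le hRB] at hr
    exact Gaux_zero r₀ p R r hr₀ hp hr.1
  rw [this, add_zero]
  rfl

lemma Faux_contOn (r₀ p B : ℝ) (hr₀ : 0 < r₀) (hp : 3 < p) (hB : r₀ ≤ B) :
    ContinuousOn (Faux r₀ p) (Icc r₀ B) := by
  have hp0 : 0 < p := by linarith
  have hcont : Continuous fun R => ∫ r in r₀..B, Gaux r₀ p R r := by
    apply intervalIntegral.continuous_of_dominated_interval
      (bound := fun r => r ^ ((2:ℝ) - p))
    · exact fun R => ((Gaux_cont_r r₀ p R hr₀ hp0)).aestronglyMeasurable.restrict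
    · intro R
      filter_upwards with r hr
      rw [uIoc_of_le hB] at hr
      rw [Real.norm_of_nonneg (Gaux_nonneg r₀ p R r)]
      exact Gaux_le r₀ p R r hr₀ hp0 hr.1.le
    · apply ContinuousOn.intervalIntegrable
      apply ContinuousOn.rpow_const continuousOn_id
      intro x hx
      rw [uIcc_of_le hB] at hx
      exact Or.inl (by simp only [id]; exact (hr₀.trans_le hx.1).ne')
    · filter_upwards with r _
      exact (Gaux_cont r₀ p hr₀ hp0).comp (continuous_id.prodMk continuous_const)
  apply (hcont.continuousOn).congr
  intro R hR
  exact Faux_eq_fixed r₀ p R B hr₀ hp0 hR.2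

lemma Faux_lower (r₀ p S R : ℝ) (hr₀ : 0 < r₀) (hp : 3 < p) (hS : r₀ < S) (hR : S ≤ R) :
    (1 - S / R) ^ p * ((r₀ ^ ((3:ℝ) - p) - S ^ ((3:ℝ) - p)) / (p - 3)) ≤ Faux r₀ p R := by
  have hp0 : 0 < p := by linarith
  have hRpos : 0 < R := (hr₀.trans hS).trans_le hR
  have hr₀R : r₀ < R := hS.trans_le hR
  set t := 1 - S / R with ht
  have ht0 : 0 ≤ t := by
    rw [ht, sub_nonneg, div_le_one hRpos]
    exact hR
  have key : Faux r₀ p R = (∫ r in r₀..S, Gaux r₀ p R r) + ∫ r in S..R, Gaux r₀ p R r :=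
    (integral_add_adjacent_intervals (Gaux_intble r₀ p R r₀ S hr₀ hp0)
      (Gaux_intble r₀ p R S R hr₀ hp0)).symm
  have h2 : 0 ≤ ∫ r in S..R, Gaux r₀ p R r :=
    integral_nonneg hR (fun r _ => Gaux_nonneg r₀ p R r)
  have h1 : (∫ r in r₀..S, t ^ p * r ^ ((2:ℝ) - p)) ≤ ∫ r in r₀..S, Gaux r₀ p R r := by
    apply integral_mono_on hS.le
    · apply ContinuousOn.intervalIntegrable
      apply continuousOn_const.mul
      apply ContinuousOn.rpow_const continuousOn_id
      intro x hx
      rw [uIcc_of_le hS.le] at hx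
      exact Or.inl (by simp only [id]; exact (hr₀.trans_le hx.1).ne')
    · exact Gaux_intble r₀ p R r₀ S hr₀ hp0
    · intro r hr
      have hrpos : 0 < r := hr₀.trans_le hr.1
      rw [Gaux_eval r₀ p R r hr₀ hr₀R ⟨hr.1, hr.2.trans hR⟩]
      have hid : 1 / r - 1 / R - t / r = (S - r) / (r * R) := by
        rw [ht]; field_simp; ring
      have hnn : 0 ≤ (S - r) / (r * R) :=
        div_nonneg (by linarith [hr.2]) (by positivity)
      have hle : t / r ≤ 1 / r - 1 / R := by linarith
      have hrw : t ^ p * r ^ ((2:ℝ) - p) = (t / r) ^ p * r ^ 2 := by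
        rw [Real.div_rpow ht0 hrpos.le, Real.rpow_sub hrpos,
          show ((2:ℝ)) = ((2:ℕ):ℝ) by norm_num, Real.rpow_natCast]
        ring
      rw [hrw]
      exact mul_le_mul_of_nonneg_right
        (Real.rpow_le_rpow (div_nonneg ht0 hrpos.le) hle hp0.le) (sq_nonneg r)
  rw [key]
  calc t ^ p * ((r₀ ^ ((3:ℝ) - p) - S ^ ((3:ℝ) - p)) / (p - 3))
      = ∫ r in r₀..S, t ^ p * r ^ ((2:ℝ) - p) := by
        rw [intervalIntegral.integral_const_mul, rpow_integral p r₀ S hp hr₀ (hr₀.trans hS)]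
    _ ≤ (∫ r in r₀..S, Gaux r₀ p R r) + ∫ r in S..R, Gaux r₀ p R r := by linarith

lemma Faux_tendsto (r₀ p : ℝ) (hr₀ : 0 < r₀) (hp : 3 < p) :
    Tendsto (Faux r₀ p) atTop (nhds (r₀ ^ ((3:ℝ) - p) / (p - 3))) := by
  have hp0 : 0 < p := by linarith
  rw [tendsto_order]
  constructor
  · intro a ha
    have hg : Tendsto (fun S : ℝ => (r₀ ^ ((3:ℝ) - p) - S ^ ((3:ℝ) - p)) / (p - 3)) atTop
        (nhds (r₀ ^ ((3:ℝ) - p) / (p - 3))) := by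
      have h0 : Tendsto (fun S : ℝ => S ^ ((3:ℝ) - p)) atTop (nhds 0) := by
        have := tendsto_rpow_neg_atTop (by linarith : (0:ℝ) < p - 3)
        simpa [show -(p-3) = 3-p by ring] using this
      have h1 : Tendsto (fun S : ℝ => (r₀ ^ ((3:ℝ)-p) - S ^ ((3:ℝ)-p)) / (p-3)) atTop
          (nhds ((r₀ ^ ((3:ℝ)-p) - 0) / (p-3))) := (tendsto_const_nhds.sub h0).div_const _
      simpa using h1
    obtain ⟨S, hSr₀, hSa⟩ :
        ∃ S, r₀ < S ∧ a < (r₀ ^ ((3:ℝ) - p) - S ^ ((3:ℝ) - p)) / (p - 3) :=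
      ((eventually_gt_atTop r₀).and (hg.eventually (eventually_gt_nhds ha))).exists
    set gS := (r₀ ^ ((3:ℝ) - p) - S ^ ((3:ℝ) - p)) / (p - 3) with hgS
    have hT : Tendsto (fun R : ℝ => (1 - S / R) ^ p * gS) atTop (nhds gS) := by
      have h1 : Tendsto (fun R : ℝ => S / R) atTop (nhds 0) := by
        simpa [div_eq_mul_inv] using tendsto_inv_atTop_zero.const_mul S
      have h2 : Tendsto (fun R : ℝ => 1 - S / R) atTop (nhds 1) := by
        have h2' : Tendsto (fun R : ℝ => 1 - S / R) atTop (nhds (1 - 0)) :=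
          tendsto_const_nhds.sub h1
        simpa using h2'
      have h3 := (Filter.Tendsto.rpow_const (p := p) h2 (Or.inl one_ne_zero)).mul_const gS
      simpa [Real.one_rpow] using h3
    filter_upwards [eventually_ge_atTop S, hT.eventually (eventually_gt_nhds hSa)] with R h1 h2
    exact h2.trans_le (Faux_lower r₀ p S R hr₀ hp hSr₀ h1)
  · intro a ha
    filter_upwards [eventually_gt_atTop r₀] with R hR
    exact (Faux_lt r₀ p R hr₀ hp hR).trans ha
/-- For 1 < γ < 4/3, with M* = 4πĀ(γ−1)/(4−3γ) · r₀^{−(4−3γ)/(γ−1)}: M(R) < M* for all R > r₀,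
M(R) → M* as R → ∞, and every mass in (0, M*) is attained by a unique radius R > r₀. -/
theorem stmt_4 (γ A g₀ r₀ : ℝ) (hγ : 1 < γ) (hγ' : γ < 4 / 3) (hA : 0 < A) (hg₀ : 0 < g₀)
    (hr₀ : 0 < r₀) :
    let Abar : ℝ := ((γ - 1) * g₀ / (γ * A)) ^ (1 / (γ - 1))
    let M : ℝ → ℝ := fun R => 4 * π * Abar * ∫ r in r₀..R, (1 / r - 1 / R) ^ (1 / (γ - 1)) * r ^ 2
    let Mstar : ℝ := 4 * π * Abar * (γ - 1) / (4 - 3 * γ) * r₀ ^ (-(4 - 3 * γ) / (γ - 1))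
    (∀ R : ℝ, r₀ < R → M R < Mstar) ∧
    Tendsto M atTop (nhds Mstar) ∧
    (∀ m : ℝ, m ∈ Ioo 0 Mstar → ∃! R : ℝ, r₀ < R ∧ M R = m) := by
  intro Abar M Mstar
  have hγ1 : (0:ℝ) < γ - 1 := by linarith
  have h43 : (0:ℝ) < 4 - 3 * γ := by linarith
  have hp : 3 < 1 / (γ - 1) := by rw [lt_div_iff₀ hγ1]; linarith
  have hAbar : (0:ℝ) < Abar :=
    Real.rpow_pos_of_pos (div_pos (mul_pos hγ1 hg₀) (mul_pos (by linarith) hA)) _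
  have hπ := Real.pi_pos
  have hc : (0:ℝ) < 4 * π * Abar := by positivity
  have hMF : ∀ R, r₀ < R → M R = 4 * π * Abar * Faux r₀ (1 / (γ - 1)) R := by
    intro R hR
    show 4 * π * Abar * _ = 4 * π * Abar * _
    congr 1
    apply intervalIntegral.integral_congr
    intro r hr
    rw [uIcc_of_le hR.le] at hr
    exact (Gaux_eval r₀ (1 / (γ - 1)) R r hr₀ hR hr).symm
  have hne3 : 1 / (γ - 1) - 3 ≠ 0 := by linarith
  have hMstar : Mstar
      = 4 * π * Abar * (r₀ ^ ((3:ℝ) - 1 / (γ - 1)) / (1 / (γ - 1) - 3)) := by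
    have h1 : -(4 - 3 * γ) / (γ - 1) = (3:ℝ) - 1 / (γ - 1) := by field_simp; ring
    show 4 * π * Abar * (γ - 1) / (4 - 3 * γ) * r₀ ^ (-(4 - 3 * γ) / (γ - 1)) = _
    have h2 : 1 / (γ - 1) - 3 = (4 - 3 * γ) / (γ - 1) := by field_simp; ring
    rw [h1, h2, div_div_eq_mul_div]
    ring
  refine ⟨?_, ?_, ?_⟩
  · intro R hR
    rw [hMF R hR, hMstar]
    exact mul_lt_mul_of_pos_left (Faux_lt r₀ _ R hr₀ hp hR) hc
  · have h2 := (Faux_tendsto r₀ (1 / (γ - 1)) hr₀ hp).const_mul (4 * π * Abar)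
    rw [hMstar]
    refine Tendsto.congr' ?_ h2
    filter_upwards [eventually_gt_atTop r₀] with R hR
    exact (hMF R hR).symm
  · intro m hm
    have hm2 : m < 4 * π * Abar * (r₀ ^ ((3:ℝ) - 1 / (γ - 1)) / (1 / (γ - 1) - 3)) := by
      rw [← hMstar]; exact hm.2
    obtain ⟨Rb, hRb₀, hRbm⟩ :
        ∃ Rb, r₀ < Rb ∧ m < 4 * π * Abar * Faux r₀ (1 / (γ - 1)) Rb :=
      ((eventually_gt_atTop r₀).and
        (((Faux_tendsto r₀ _ hr₀ hp).const_mul (4 * π * Abar)).eventually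
          (eventually_gt_nhds hm2))).exists
    have hcont : ContinuousOn (fun R => 4 * π * Abar * Faux r₀ (1 / (γ - 1)) R) (Icc r₀ Rb) :=
      continuousOn_const.mul (Faux_contOn r₀ _ Rb hr₀ hp hRb₀.le)
    have h0 : Faux r₀ (1 / (γ - 1)) r₀ = 0 := intervalIntegral.integral_same
    have hmem : m ∈ Ioo ((fun R => 4 * π * Abar * Faux r₀ (1 / (γ - 1)) R) r₀)
        ((fun R => 4 * π * Abar * Faux r₀ (1 / (γ - 1)) R) Rb) := by
      constructor
      · simp only [h0, mul_zero]; exact hm.1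
      · exact hRbm
    obtain ⟨R, hRmem, hRm⟩ := intermediate_value_Ioo hRb₀.le hcont hmem
    refine ⟨R, ⟨hRmem.1, by rw [hMF R hRmem.1]; exact hRm⟩, ?_⟩
    rintro R' ⟨hR', hMR'⟩
    have heq : Faux r₀ (1 / (γ - 1)) R' = Faux r₀ (1 / (γ - 1)) R := by
      have e1 := hMF R' hR'
      have e2 := hMF R hRmem.1
      have : 4 * π * Abar * Faux r₀ (1 / (γ - 1)) R'
          = 4 * π * Abar * Faux r₀ (1 / (γ - 1)) R := by
        rw [← e1, ← e2, hMR']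
        rw [hMF R hRmem.1] at *
        exact hRm.symm
      exact mul_left_cancel₀ hc.ne' this
    exact (Faux_strictMono r₀ _ hr₀ hp).injOn (mem_Ici.2 hR'.le) (mem_Ici.2 hRmem.1.le) heq
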